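/- For every real α > 0 and complex numbers A, B, the double integral over ℝ² of e^{2πi(Ax+By)} e^{-πα(x²+y²)} e^{-2πixy} dx dy equals (1/√(α²+1)) exp(−(π/(α²+1)) (αA² + αB² − 2iAB)). -/

import Mathlib

open MeasureTheory Complex

set_option maxHeartbeats 1000000 in
theorem double_gaussian_integral (α : ℝ) (hα : 0 < α) (A B : ℂ) :
    ∫ p : ℝ × ℝ, Complex.exp (2 * Real.pi * Complex.I * (A * p.1 + B * p.2)) *
        Complex.exp (-Real.pi * α * (p.1 ^ 2 + p.2 ^ 2)) *
        Complex.exp (-2 * Real.pi * Complex.I * p.1 * p.2)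
      = (1 / Real.sqrt (α ^ 2 + 1)) *
        Complex.exp (-(Real.pi / (α ^ 2 + 1)) * (α * A ^ 2 + α * B ^ 2 - 2 * Complex.I * A * B)) := by
  have hπ := Real.pi_pos
  have hπc : (Real.pi : ℂ) ≠ 0 := by exact_mod_cast hπ.ne'
  have hαc : (α : ℂ) ≠ 0 := by exact_mod_cast hα.ne'
  have hα1 : (0:ℝ) < α ^ 2 + 1 := by positivity
  have hα1c : ((α:ℂ) ^ 2 + 1) ≠ 0 := by
    have h : ((α:ℂ) ^ 2 + 1) = ((α ^ 2 + 1 : ℝ) : ℂ) := by push_cast; ring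
    rw [h]; exact_mod_cast hα1.ne'
  have hb : (-(Real.pi : ℂ) * α).re < 0 := by
    have h : (-(Real.pi : ℂ) * α) = ((-(Real.pi * α) : ℝ) : ℂ) := by push_cast; ring
    rw [h, ofReal_re]; nlinarith
  have hb' : ((-(Real.pi : ℂ)) * ((α^2 + 1) / α)).re < 0 := by
    have h : ((-(Real.pi : ℂ)) * ((α^2 + 1) / α)) = ((-(Real.pi * ((α^2+1)/α)) : ℝ) : ℂ) := by
      push_cast; ring
    rw [h, ofReal_re]
    have : 0 < Real.pi * ((α^2+1)/α) := by positivity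
    linarith
  -- the integrand as a single exponential, quadratic in p.2
  have key : ∀ p : ℝ × ℝ,
      Complex.exp (2 * Real.pi * Complex.I * (A * p.1 + B * p.2)) *
        Complex.exp (-Real.pi * α * (p.1 ^ 2 + p.2 ^ 2)) *
        Complex.exp (-2 * Real.pi * Complex.I * p.1 * p.2)
      = Complex.exp ((-(Real.pi : ℂ) * α) * (p.2 : ℂ) ^ 2 +
          (2 * Real.pi * Complex.I * B - 2 * Real.pi * Complex.I * p.1) * p.2 +
          (2 * Real.pi * Complex.I * A * p.1 + (-(Real.pi : ℂ) * α) * (p.1 : ℂ) ^ 2)) := by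
    intro p
    rw [← Complex.exp_add, ← Complex.exp_add]
    ring_nf
  -- integrability
  have hg : Integrable (fun x : ℝ => Complex.exp ((-(Real.pi : ℂ) * α) * (x:ℂ) ^ 2 +
      (2 * Real.pi * Complex.I * A) * x + 0)) := integrable_cexp_quadratic' hb _ _
  have hh : Integrable (fun y : ℝ => Complex.exp ((-(Real.pi : ℂ) * α) * (y:ℂ) ^ 2 +
      (2 * Real.pi * Complex.I * B) * y + 0)) := integrable_cexp_quadratic' hb _ _
  have hint : Integrable (fun p : ℝ × ℝ =>
      Complex.exp ((-(Real.pi : ℂ) * α) * (p.2 : ℂ) ^ 2 +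
        (2 * Real.pi * Complex.I * B - 2 * Real.pi * Complex.I * p.1) * p.2 +
        (2 * Real.pi * Complex.I * A * p.1 + (-(Real.pi : ℂ) * α) * (p.1 : ℂ) ^ 2)))
      ((volume : Measure ℝ).prod (volume : Measure ℝ)) := by
    apply Integrable.mono' (hg.norm.mul_prod hh.norm)
    · apply Continuous.aestronglyMeasurable
      fun_prop
    · filter_upwards with p
      rw [Complex.norm_exp,
        Complex.norm_exp, Complex.norm_exp, ← Real.exp_add]
      apply le_of_eq
      congr 1
      simp only [add_re, mul_re, sub_re, neg_re, ofReal_re, ofReal_im, I_re, I_im,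
        mul_im, sub_im, neg_im, add_im, pow_two, zero_re, zero_im,
        Complex.re_ofNat, Complex.im_ofNat]
      ring
  -- inner integral
  have inner : ∀ x : ℝ, (∫ y : ℝ, Complex.exp ((-(Real.pi : ℂ) * α) * (y : ℂ) ^ 2 +
        (2 * Real.pi * Complex.I * B - 2 * Real.pi * Complex.I * x) * y +
        (2 * Real.pi * Complex.I * A * x + (-(Real.pi : ℂ) * α) * (x : ℂ) ^ 2)))
      = ((Real.pi : ℂ) / -(-(Real.pi : ℂ) * α)) ^ (1/2 : ℂ) *
        Complex.exp (((-(Real.pi : ℂ)) * ((α^2 + 1) / α)) * (x:ℂ)^2 +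
          (2 * Real.pi * Complex.I * A + 2 * Real.pi * B / α) * x +
          (-(Real.pi : ℂ) * B^2 / α)) := by
    intro x
    rw [integral_cexp_quadratic hb]
    congr 2
    field_simp
    ring_nf
    simp only [Complex.I_sq]
    ring
  rw [Measure.volume_eq_prod, integral_congr_ae (Filter.Eventually.of_forall key),
    integral_prod _ hint]
  simp_rw [inner]
  rw [integral_const_mul, integral_cexp_quadratic hb']
  -- final algebra
  have e1 : ((Real.pi : ℂ) / -(-(Real.pi : ℂ) * α)) = ((1/α : ℝ) : ℂ) := by
    push_cast; field_simp
  have e2 : ((Real.pi : ℂ) / (-((-(Real.pi : ℂ)) * ((α^2 + 1) / α)))) = ((α / (α^2+1) : ℝ) : ℂ) := by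
    push_cast; field_simp
  have sq : ∀ r : ℝ, 0 ≤ r → ((r:ℂ)) ^ (1/2 : ℂ) = ((Real.sqrt r : ℝ) : ℂ) := by
    intro r hr
    rw [show ((1/2 : ℂ)) = ((1/2 : ℝ) : ℂ) by norm_num, ← Complex.ofReal_cpow hr,
      Real.sqrt_eq_rpow]
  rw [e1, e2, sq _ (by positivity), sq _ (by positivity), ← mul_assoc,
    ← Complex.ofReal_mul, ← Real.sqrt_mul (by positivity)]
  have e3 : (1/α) * (α / (α^2+1)) = 1 / (α^2+1) := by field_simp
  have e4 : Real.sqrt (1/(α^2+1)) = 1 / Real.sqrt (α^2+1) := by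
    rw [one_div, Real.sqrt_inv, one_div]
  rw [e3, e4]
  congr 1
  · push_cast; ring
  congr 1
  obtain ⟨s, hs⟩ : ∃ s : ℂ, s = (α:ℂ)^2 + 1 := ⟨_, rfl⟩
  rw [← hs]
  have hs0 : s ≠ 0 := hs ▸ hα1c
  field_simp
  subst hs
  ring_nf
  simp only [Complex.I_sq]
  ring
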